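/- arXiv:2301.05610 — 2 statements merged into one kernel-verified Lean document; each statement's English description precedes it below -/
import Mathlib

section
/- Let M ∈ ℂ^{n×n} be invertible, B ∈ ℂ^{n×n_I}, C ∈ ℂ^{n_O×n}, and let V ∈ ℂ^{n×r} be such that M̂ := VᵀMV is invertible. Let V_r ∈ ℂ^{n×ρ} be such that M_r := VᵣᵀMVᵣ is invertible, and for each column index j let x̂_{r_j} := Vᵣ (VᵣᵀMVᵣ)^{-1} Vᵣᵀ r_j be the Galerkin approximation of the solution of the residual system M x_{r_j} = r_j. Define the error estimator Δ̃ := max_{i,j} |C_i x̂_{r_j}| and δ := max_{i,j} |C_i (x_{r_j} − x̂_{r_j})|, where C_i is the i-th row of C. Then the maximum-entry output error of the reduced-order model satisfies the two-sided bound Δ̃ − δ ≤ ‖y − ŷ‖_max ≤ Δ̃ + δ. -/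
open Matrix

/-- **Two-sided bound for the error estimator `Δ̃` (Lemma 1 / Theorem 4.2 of [FengB21]).**
Let `M : ℂ^{n×n}` be invertible, `B : ℂ^{n×n_I}`, `C : ℂ^{n_O×n}`, and `V : ℂ^{n×r}` with
`M̂ := VᵀMV` invertible.  FOM output: `y := C M⁻¹ B`; ROM output: `ŷ := C V M̂⁻¹ VᵀB`;
residual `R := B − M V M̂⁻¹ VᵀB` with columns `r_j`; exact residual-system solutions
`x_{r_j} := M⁻¹ r_j`.  Let `V_r : ℂ^{n×ρ}` with `M_r := VᵣᵀMVᵣ` invertible and Galerkin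
approximations `x̂_{r_j} := Vᵣ Mᵣ⁻¹ Vᵣᵀ r_j`.  With `Δ̃ := max_{i,j} |C_i x̂_{r_j}|` and
`δ := max_{i,j} |C_i (x_{r_j} − x̂_{r_j})|`, the maximum-entry output error satisfies
`Δ̃ − δ ≤ ‖y − ŷ‖_max ≤ Δ̃ + δ`. -/
theorem estimator_two_sided_bound
    {n nI nO r ρ : ℕ} [NeZero nI] [NeZero nO]
    (M : Matrix (Fin n) (Fin n) ℂ) (B : Matrix (Fin n) (Fin nI) ℂ)
    (C : Matrix (Fin nO) (Fin n) ℂ)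
    (V : Matrix (Fin n) (Fin r) ℂ) (Vr : Matrix (Fin n) (Fin ρ) ℂ)
    (hM : IsUnit M.det)
    (hMhat : IsUnit (Vᵀ * M * V).det)
    (hMr : IsUnit (Vrᵀ * M * Vr).det)
    -- residual matrix `R := B − M x̂`
    (R : Matrix (Fin n) (Fin nI) ℂ)
    (hR : R = B - M * (V * (Vᵀ * M * V)⁻¹ * (Vᵀ * B)))
    -- exact residual-system solutions and their Galerkin approximations
    (xr xrhat : Fin nI → Fin n → ℂ)
    (hxr : ∀ j, xr j = M⁻¹.mulVec fun k => R k j)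
    (hxrhat : ∀ j, xrhat j = (Vr * (Vrᵀ * M * Vr)⁻¹ * Vrᵀ).mulVec fun k => R k j)
    -- the estimator `Δ̃`, the deviation `δ`, and the true max-entry error
    (Δ δ errMax : ℝ)
    (hΔ : Δ = (Finset.univ : Finset (Fin nO × Fin nI)).sup' Finset.univ_nonempty
        fun p => ‖(C.mulVec (xrhat p.2) p.1)‖)
    (hδ : δ = (Finset.univ : Finset (Fin nO × Fin nI)).sup' Finset.univ_nonempty
        fun p => ‖(C.mulVec (xr p.2 - xrhat p.2) p.1)‖)
    (herr : errMax = (Finset.univ : Finset (Fin nO × Fin nI)).sup' Finset.univ_nonempty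
        fun p =>
          ‖
            (((C * M⁻¹ * B) - (C * V * (Vᵀ * M * V)⁻¹ * (Vᵀ * B))) p.1 p.2)‖) :
    Δ - δ ≤ errMax ∧ errMax ≤ Δ + δ := by
  have hMinv : M⁻¹ * M = 1 := Matrix.nonsing_inv_mul M hM
  have key : ∀ (i : Fin nO) (j : Fin nI),
      ((C * M⁻¹ * B) - (C * V * (Vᵀ * M * V)⁻¹ * (Vᵀ * B))) i j
        = C.mulVec (xr j) i := by
    intro i j
    have h1 : C * M⁻¹ * R = (C * M⁻¹ * B) - (C * V * (Vᵀ * M * V)⁻¹ * (Vᵀ * B)) := by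
      rw [hR, Matrix.mul_sub]
      congr 1
      simp only [← Matrix.mul_assoc]
      rw [Matrix.mul_assoc C M⁻¹ M, hMinv, Matrix.mul_one]
    rw [← h1, hxr j, Matrix.mulVec_mulVec]
    simp [Matrix.mul_apply, Matrix.mulVec, dotProduct]
  have hdecomp : ∀ j : Fin nI, C.mulVec (xr j)
      = C.mulVec (xrhat j) + C.mulVec (xr j - xrhat j) := by
    intro j
    rw [Matrix.mulVec_sub]
    abel
  constructor
  · rw [sub_le_iff_le_add, hΔ]
    apply Finset.sup'_le
    intro p _
    have h2 : ‖C.mulVec (xrhat p.2) p.1‖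
        ≤ ‖C.mulVec (xr p.2) p.1‖
          + ‖C.mulVec (xr p.2 - xrhat p.2) p.1‖ := by
      have := congrFun (hdecomp p.2) p.1
      simp only [Pi.add_apply] at this
      calc ‖C.mulVec (xrhat p.2) p.1‖
          = ‖C.mulVec (xr p.2) p.1 - C.mulVec (xr p.2 - xrhat p.2) p.1‖ := by
            rw [this]; ring_nf
        _ ≤ _ := by
            simpa using norm_sub_le (C.mulVec (xr p.2) p.1)
              (C.mulVec (xr p.2 - xrhat p.2) p.1)
    refine h2.trans (add_le_add ?_ ?_)
    · rw [herr]
      refine Finset.le_sup'_of_le _ (Finset.mem_univ p) ?_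
      rw [key p.1 p.2]
    · rw [hδ]
      exact Finset.le_sup'
        (fun q : Fin nO × Fin nI => ‖C.mulVec (xr q.2 - xrhat q.2) q.1‖)
        (Finset.mem_univ p)
  · rw [herr]
    apply Finset.sup'_le
    intro p _
    rw [key p.1 p.2]
    have := congrFun (hdecomp p.2) p.1
    simp only [Pi.add_apply] at this
    calc ‖C.mulVec (xr p.2) p.1‖
        ≤ ‖C.mulVec (xrhat p.2) p.1‖
          + ‖C.mulVec (xr p.2 - xrhat p.2) p.1‖ := by
          rw [this]; exact norm_add_le _ _
      _ ≤ Δ + δ := by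
          refine add_le_add ?_ ?_
          · rw [hΔ]
            exact Finset.le_sup'
              (fun q : Fin nO × Fin nI => ‖C.mulVec (xrhat q.2) q.1‖)
              (Finset.mem_univ p)
          · rw [hδ]
            exact Finset.le_sup'
              (fun q : Fin nO × Fin nI => ‖C.mulVec (xr q.2 - xrhat q.2) q.1‖)
              (Finset.mem_univ p)
end

section
/- Let M ∈ ℂ^{n×n} be invertible, B ∈ ℂ^{n×n_I}, C ∈ ℂ^{n_O×n}, and let V ∈ ℂ^{n×r} be such that M̂ := VᵀMV is invertible. Let x̂_{r_j} ∈ ℂ^n be any approximations of the exact residual-system solutions x_{r_j} := M^{-1} r_j, and set δ_{ij} := |C_i x_{r_j} − C_i x̂_{r_j}|. Then for all indices i, j the entrywise output error of the reduced-order model satisfies |y_{ij} − ŷ_{ij}| ≤ |C_i x̂_{r_j}| + δ_{ij}. -/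
open Matrix

/-- **Upper bound for the entrywise output error.**
For an invertible `M : ℂ^{n×n}`, `B : ℂ^{n×n_I}`, `C : ℂ^{n_O×n}` and a projection matrix
`V : ℂ^{n×r}` with `M̂ := VᵀMV` invertible, let `y := C M⁻¹ B`, `ŷ := C V M̂⁻¹ VᵀB`,
`R := B − M V M̂⁻¹ VᵀB` with columns `r_j`, and `x_{r_j} := M⁻¹ r_j`. If `x̂_{r_j}` are
arbitrary approximations of the `x_{r_j}` and `δ_{ij} := |C_i x_{r_j} − C_i x̂_{r_j}|`,
then `|y_{ij} − ŷ_{ij}| ≤ |C_i x̂_{r_j}| + δ_{ij}` for all `i, j`. -/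
theorem rom_error_upper_bound_entrywise
    {n nI nO r : ℕ}
    (M : Matrix (Fin n) (Fin n) ℂ) (B : Matrix (Fin n) (Fin nI) ℂ)
    (C : Matrix (Fin nO) (Fin n) ℂ) (V : Matrix (Fin n) (Fin r) ℂ)
    (hM : IsUnit M.det) (hMhat : IsUnit (Vᵀ * M * V).det)
    (xrhat : Fin nI → Fin n → ℂ) :
    ∀ (i : Fin nO) (j : Fin nI),
      ‖
        (((C * M⁻¹ * B) - (C * V * (Vᵀ * M * V)⁻¹ * (Vᵀ * B))) i j)‖
      ≤ ‖(C.mulVec (xrhat j) i)‖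
        + ‖
            (C.mulVec
              (M⁻¹.mulVec fun k =>
                  (B - M * (V * (Vᵀ * M * V)⁻¹ * (Vᵀ * B))) k j) i
              - C.mulVec (xrhat j) i)‖ := by
  intro i j
  set X := V * (Vᵀ * M * V)⁻¹ * (Vᵀ * B) with hX
  have hcol : M⁻¹.mulVec (fun k => (B - M * X) k j)
      = fun i' => (M⁻¹ * (B - M * X)) i' j := by
    funext i'
    simp [mulVec, dotProduct, Matrix.mul_apply]
  have h2 : M⁻¹ * (B - M * X) = M⁻¹ * B - X := by
    rw [Matrix.mul_sub, ← Matrix.mul_assoc, Matrix.nonsing_inv_mul M hM, Matrix.one_mul]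
  have key : C.mulVec (M⁻¹.mulVec fun k => (B - M * X) k j) i
      = ((C * M⁻¹ * B) - (C * V * (Vᵀ * M * V)⁻¹ * (Vᵀ * B))) i j := by
    rw [hcol, h2]
    have hCX : C * V * (Vᵀ * M * V)⁻¹ * (Vᵀ * B) = C * X := by
      simp only [hX, Matrix.mul_assoc]
    rw [hCX]
    have : C.mulVec (fun i' => (M⁻¹ * B - X) i' j) i = (C * (M⁻¹ * B - X)) i j := by
      simp [mulVec, dotProduct, Matrix.mul_apply]
    rw [this, Matrix.mul_sub, Matrix.mul_assoc]
  rw [← key]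
  set a := C.mulVec (M⁻¹.mulVec fun k => (B - M * X) k j) i
  set b := C.mulVec (xrhat j) i
  calc ‖a‖ = ‖b + (a - b)‖ := by ring_nf
    _ ≤ ‖b‖ + ‖a - b‖ := norm_add_le _ _
end
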